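/- Let μ be a Borel probability measure on a standard Borel space X and let φ be a continuous unitary representation of L^0(μ,T) on a separable complex Hilbert space. Then there exists a finite Borel measure ν on X such that: (i) ν ≪ μ and φ is the composition of the natural homomorphism L^0(μ,T) → L^0(ν,T) with a continuous unitary representation of L^0(ν,T); and (ii) whenever ν' is a finite Borel measure on X with ν' ≪ μ such that φ is the composition of the natural homomorphism L^0(μ,T) → L^0(ν',T) with a continuous unitary representation of L^0(ν',T), then ν ≪ ν'. -/

import Mathlib

open MeasureTheory TopologicalSpace
open scoped Topology ENNReal NNReal

noncomputable section

/-- The topology of convergence in measure on the space `L⁰(μ, G) = X →ₘ[μ] G` of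
`μ`-equivalence classes of measurable functions. -/
instance l0TopologicalSpace {X G : Type*} [MeasurableSpace X] {μ : Measure X} [MetricSpace G] :
    TopologicalSpace (X →ₘ[μ] G) :=
  TopologicalSpace.generateFrom
    { U | ∃ (f : X →ₘ[μ] G) (ε δ : ℝ), 0 < ε ∧ 0 < δ ∧
        U = { g | μ { x | ε ≤ dist (f x) (g x) } < ENNReal.ofReal δ } }

/-- The natural homomorphism `L⁰(μ, 𝕋) → L⁰(ν, 𝕋)` for `ν ≪ μ`: the `ν`-equivalence class of
a function contains its `μ`-equivalence class. -/
def l0NatMap {X : Type*} [MeasurableSpace X] {μ ν : Measure X} (h : ν ≪ μ)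
    (f : X →ₘ[μ] Circle) : X →ₘ[ν] Circle :=
  AEEqFun.mk ⇑f (f.aestronglyMeasurable.mono_ac h)

/-- `φ` is the composition of the natural homomorphism `L⁰(μ, 𝕋) → L⁰(ν, 𝕋)` and a
continuous (i.e. strongly continuous) unitary representation `ψ` of `L⁰(ν, 𝕋)`. -/
def FactorsThroughL0 {X : Type*} [MeasurableSpace X] {μ ν : Measure X}
    {H : Type*} [NormedAddCommGroup H] [InnerProductSpace ℂ H] [CompleteSpace H]
    (φ : (X →ₘ[μ] Circle) →* unitary (H →L[ℂ] H)) (h : ν ≪ μ) : Prop :=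
  ∃ ψ : (X →ₘ[ν] Circle) →* unitary (H →L[ℂ] H),
    (∀ v : H, Continuous fun g : X →ₘ[ν] Circle => (ψ g : H →L[ℂ] H) v) ∧
    ∀ f, φ f = ψ (l0NatMap h f)

namespace SoleckiAux

open Filter Set

variable {X : Type*} [MeasurableSpace X] {μ : Measure X}

/-- The generating family of the topology of convergence in measure. -/
def gen (μ : Measure X) : Set (Set (X →ₘ[μ] Circle)) :=
  { U | ∃ (f : X →ₘ[μ] Circle) (ε δ : ℝ), 0 < ε ∧ 0 < δ ∧
      U = { g | μ { x | ε ≤ dist (f x) (g x) } < ENNReal.ofReal δ } }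

lemma isOpen_gen {U : Set (X →ₘ[μ] Circle)} (hU : U ∈ gen μ) : IsOpen U :=
  TopologicalSpace.isOpen_generateFrom_of_mem hU

lemma tendsto_gen {s : ℕ → X →ₘ[μ] Circle} {h : X →ₘ[μ] Circle}
    (H : ∀ U ∈ gen μ, h ∈ U → ∀ᶠ n in atTop, s n ∈ U) :
    Tendsto s atTop (𝓝 h) :=
  tendsto_nhds_generateFrom_iff.mpr H

open scoped Classical in
/-- Extend a function by `1` outside `A`. -/
def pw (A : Set X) (g : X → Circle) : X → Circle := fun x => if x ∈ A then g x else 1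

lemma pw_of_mem {A : Set X} {x : X} (h : x ∈ A) (g : X → Circle) : pw A g x = g x := if_pos h

lemma pw_of_not_mem {A : Set X} {x : X} (h : x ∉ A) (g : X → Circle) : pw A g x = 1 := if_neg h

lemma aesm_pw {A : Set X} (hA : MeasurableSet A) {g : X → Circle}
    (hg : AEStronglyMeasurable g (μ.restrict A)) : AEStronglyMeasurable (pw A g) μ := by
  obtain ⟨g', hg', hgg'⟩ := hg
  refine ⟨pw A g', ?_, ?_⟩
  · classical
    have hpe : pw A g' = A.piecewise g' fun _ => 1 := by
      funext x; by_cases hx : x ∈ A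
      · rw [pw_of_mem hx, Set.piecewise_eq_of_mem _ _ _ hx]
      · rw [pw_of_not_mem hx, Set.piecewise_eq_of_notMem _ _ _ hx]
    rw [hpe]
    exact StronglyMeasurable.piecewise hA hg' stronglyMeasurable_const
  · have h1 : ∀ᵐ x ∂μ, x ∈ A → g x = g' x := (ae_restrict_iff' hA).1 hgg'
    filter_upwards [h1] with x hx
    by_cases hxA : x ∈ A
    · rw [pw_of_mem hxA, pw_of_mem hxA, hx hxA]
    · rw [pw_of_not_mem hxA, pw_of_not_mem hxA]


/-- Extension map `L⁰(μ.restrict A, 𝕋) → L⁰(μ, 𝕋)`, extending by `1` off `A`. -/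
def ext1 {A : Set X} (hA : MeasurableSet A) (g : X →ₘ[μ.restrict A] Circle) :
    X →ₘ[μ] Circle :=
  AEEqFun.mk (pw A ⇑g) (aesm_pw hA g.aestronglyMeasurable)

lemma coeFn_ext1 {A : Set X} (hA : MeasurableSet A) (g : X →ₘ[μ.restrict A] Circle) :
    ⇑(ext1 (μ := μ) hA g) =ᵐ[μ] pw A ⇑g :=
  AEEqFun.coeFn_mk _ _

lemma ext1_one {A : Set X} (hA : MeasurableSet A) :
    ext1 (μ := μ) hA 1 = 1 := by
  apply AEEqFun.ext
  have h1 : ∀ᵐ x ∂μ, x ∈ A → (1 : X →ₘ[μ.restrict A] Circle) x = 1 :=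
    (ae_restrict_iff' hA).1 (AEEqFun.coeFn_one (β := Circle))
  filter_upwards [coeFn_ext1 hA 1, h1, AEEqFun.coeFn_one (β := Circle) (μ := μ)]
    with x hx h2x h3
  rw [hx, h3]
  by_cases hxA : x ∈ A
  · rw [pw_of_mem hxA, h2x hxA]; rfl
  · rw [pw_of_not_mem hxA]; rfl

lemma ext1_mul {A : Set X} (hA : MeasurableSet A) (g₁ g₂ : X →ₘ[μ.restrict A] Circle) :
    ext1 (μ := μ) hA (g₁ * g₂) = ext1 hA g₁ * ext1 hA g₂ := by
  apply AEEqFun.ext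
  have h1 : ∀ᵐ x ∂μ, x ∈ A → (g₁ * g₂) x = g₁ x * g₂ x :=
    (ae_restrict_iff' hA).1 (AEEqFun.coeFn_mul g₁ g₂)
  filter_upwards [coeFn_ext1 hA (g₁ * g₂), AEEqFun.coeFn_mul (ext1 (μ := μ) hA g₁)
    (ext1 hA g₂), coeFn_ext1 hA g₁, coeFn_ext1 hA g₂, h1] with x hx hmul hx1 hx2 h1x
  rw [hx, hmul, Pi.mul_apply, hx1, hx2]
  by_cases hxA : x ∈ A
  · rw [pw_of_mem hxA, pw_of_mem hxA, pw_of_mem hxA, h1x hxA]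
  · rw [pw_of_not_mem hxA, pw_of_not_mem hxA, pw_of_not_mem hxA, one_mul]

/-- `ext1` as a monoid hom. -/
def extHom {A : Set X} (hA : MeasurableSet A) :
    (X →ₘ[μ.restrict A] Circle) →* (X →ₘ[μ] Circle) where
  toFun := ext1 hA
  map_one' := ext1_one hA
  map_mul' := ext1_mul hA

lemma measure_ext1 {A : Set X} (hA : MeasurableSet A) (f : X →ₘ[μ] Circle) (ε : ℝ)
    (g : X →ₘ[μ.restrict A] Circle) :
    μ { x | ε ≤ dist (f x) ((ext1 hA g) x) }
      = (μ.restrict A) { x | ε ≤ dist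
          ((l0NatMap (μ := μ) (ν := μ.restrict A)
            (Measure.absolutelyContinuous_of_le Measure.restrict_le_self) f) x) (g x) }
        + μ ({ x | ε ≤ dist (f x) 1 } \ A) := by
  set hAC : μ.restrict A ≪ μ :=
    Measure.absolutelyContinuous_of_le Measure.restrict_le_self with hAC_def
  have e1 : { x | ε ≤ dist (f x) ((ext1 hA g) x) }
      =ᵐ[μ] { x | ε ≤ dist (f x) (pw A (⇑g) x) } := by
    rw [Filter.eventuallyEq_set]
    filter_upwards [coeFn_ext1 hA g] with x hx
    simp only [Set.mem_setOf_eq, hx]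
  rw [measure_congr e1, ← measure_inter_add_diff _ hA]
  congr 1
  · rw [Measure.restrict_apply' hA]
    have e2 : (({ x | ε ≤ dist ((l0NatMap hAC f) x) (g x) } ∩ A : Set X))
        =ᵐ[μ] (({ x | ε ≤ dist (f x) (pw A (⇑g) x) } ∩ A : Set X)) := by
      rw [Filter.eventuallyEq_set]
      have h1 : ∀ᵐ x ∂μ, x ∈ A → (l0NatMap hAC f) x = f x :=
        (ae_restrict_iff' hA).1 (AEEqFun.coeFn_mk (⇑f) _)
      filter_upwards [h1] with x hx
      constructor
      · rintro ⟨hm, hxA⟩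
        refine ⟨?_, hxA⟩
        rw [Set.mem_setOf_eq, pw_of_mem hxA]
        rw [Set.mem_setOf_eq, hx hxA] at hm
        exact hm
      · rintro ⟨hm, hxA⟩
        refine ⟨?_, hxA⟩
        rw [Set.mem_setOf_eq, pw_of_mem hxA] at hm
        rw [Set.mem_setOf_eq, hx hxA]
        exact hm
    exact (measure_congr e2).symm
  · congr 1
    ext x
    simp only [Set.mem_diff, Set.mem_setOf_eq]
    constructor
    · rintro ⟨hm, hxA⟩
      rw [pw_of_not_mem hxA] at hm
      exact ⟨hm, hxA⟩
    · rintro ⟨hm, hxA⟩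
      rw [pw_of_not_mem hxA]
      exact ⟨hm, hxA⟩

lemma continuous_ext1 {A : Set X} (hA : MeasurableSet A) :
    Continuous (ext1 (μ := μ) hA) := by
  rw [show (l0TopologicalSpace : TopologicalSpace (X →ₘ[μ] Circle))
    = TopologicalSpace.generateFrom (gen μ) from rfl, continuous_generateFrom_iff]
  rintro U ⟨f, ε, δ, hε, hδ, rfl⟩
  set hAC : μ.restrict A ≪ μ :=
    Measure.absolutelyContinuous_of_le Measure.restrict_le_self
  set c : ℝ≥0∞ := μ ({ x | ε ≤ dist (f x) 1 } \ A) with hc_def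
  have hpre : ext1 (μ := μ) hA ⁻¹' { g | μ { x | ε ≤ dist (f x) (g x) } < ENNReal.ofReal δ }
      = { g : X →ₘ[μ.restrict A] Circle |
          (μ.restrict A) { x | ε ≤ dist ((l0NatMap hAC f) x) (g x) } + c < ENNReal.ofReal δ } := by
    ext g
    simp only [Set.mem_preimage, Set.mem_setOf_eq]
    rw [measure_ext1 hA f ε g]
  rw [hpre]
  by_cases hc : ENNReal.ofReal δ ≤ c
  · have : { g : X →ₘ[μ.restrict A] Circle |
        (μ.restrict A) { x | ε ≤ dist ((l0NatMap hAC f) x) (g x) } + c < ENNReal.ofReal δ }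
        = ∅ := by
      ext g
      simp only [Set.mem_setOf_eq, Set.mem_empty_iff_false, iff_false, not_lt]
      exact hc.trans le_add_self
    rw [this]; exact isOpen_empty
  · push_neg at hc
    have hcne : c ≠ ∞ := (hc.trans ENNReal.ofReal_lt_top).ne
    have hctr : c.toReal < δ := by
      have := (ENNReal.lt_ofReal_iff_toReal_lt hcne).1 hc
      exact this
    have heq : { g : X →ₘ[μ.restrict A] Circle |
        (μ.restrict A) { x | ε ≤ dist ((l0NatMap hAC f) x) (g x) } + c < ENNReal.ofReal δ }
        = { g : X →ₘ[μ.restrict A] Circle |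
            (μ.restrict A) { x | ε ≤ dist ((l0NatMap hAC f) x) (g x) }
              < ENNReal.ofReal (δ - c.toReal) } := by
      ext g
      simp only [Set.mem_setOf_eq]
      rw [ENNReal.ofReal_sub _ ENNReal.toReal_nonneg, ENNReal.ofReal_toReal hcne,
        lt_tsub_iff_right]
    rw [heq]
    exact isOpen_gen ⟨l0NatMap hAC f, ε, δ - c.toReal, hε, by linarith, rfl⟩


variable {H : Type*} [NormedAddCommGroup H] [InnerProductSpace ℂ H] [CompleteSpace H]

/-- The kernel property: `φ` is trivial on functions that are `1` a.e. on `A`. -/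
def P (μ : Measure X) (φ : (X →ₘ[μ] Circle) →* unitary (H →L[ℂ] H)) (A : Set X) : Prop :=
  ∀ h : X →ₘ[μ] Circle, (⇑h =ᵐ[μ.restrict A] fun _ => 1) → φ h = 1

variable {φ : (X →ₘ[μ] Circle) →* unitary (H →L[ℂ] H)}

lemma P_univ (φ : (X →ₘ[μ] Circle) →* unitary (H →L[ℂ] H)) : P μ φ Set.univ := by
  intro h hh
  rw [Measure.restrict_univ] at hh
  have : h = 1 := AEEqFun.ext (by
    filter_upwards [hh, AEEqFun.coeFn_one (β := Circle) (μ := μ)] with x h1 h2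
    rw [h1, h2, Pi.one_apply])
  rw [this, map_one]

lemma P_inter {A B : Set X} (hA : MeasurableSet A) (hB : MeasurableSet B)
    (hPA : P μ φ A) (hPB : P μ φ B) : P μ φ (A ∩ B) := by
  intro h hh
  set h₁ : X →ₘ[μ] Circle :=
    AEEqFun.mk (pw Aᶜ ⇑h) (aesm_pw hA.compl h.aestronglyMeasurable.restrict) with h₁_def
  set h₂ : X →ₘ[μ] Circle :=
    AEEqFun.mk (pw A ⇑h) (aesm_pw hA h.aestronglyMeasurable.restrict) with h₂_def
  have hc₁ : ⇑h₁ =ᵐ[μ] pw Aᶜ ⇑h := AEEqFun.coeFn_mk _ _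
  have hc₂ : ⇑h₂ =ᵐ[μ] pw A ⇑h := AEEqFun.coeFn_mk _ _
  have hsplit : h = h₁ * h₂ := by
    apply AEEqFun.ext
    filter_upwards [AEEqFun.coeFn_mul h₁ h₂, hc₁, hc₂] with x hmul h1x h2x
    rw [hmul, Pi.mul_apply, h1x, h2x]
    by_cases hxA : x ∈ A
    · rw [pw_of_not_mem (by simpa using hxA), pw_of_mem hxA, one_mul]
    · rw [pw_of_mem (by simpa using hxA), pw_of_not_mem hxA, mul_one]
  have hφ₁ : φ h₁ = 1 := by
    apply hPA
    filter_upwards [hc₁.restrict (s := A), ae_restrict_mem hA] with x h1x hxA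
    rw [h1x, pw_of_not_mem (by simpa using hxA)]
  have hφ₂ : φ h₂ = 1 := by
    apply hPB
    have hhAB : ∀ᵐ x ∂μ, x ∈ A ∩ B → h x = 1 := (ae_restrict_iff' (hA.inter hB)).1 hh
    filter_upwards [hc₂.restrict (s := B), ae_restrict_of_ae (μ := μ) (s := B) hhAB,
      ae_restrict_mem hB] with x h2x hABx hxB
    rw [h2x]
    by_cases hxA : x ∈ A
    · rw [pw_of_mem hxA]; exact hABx ⟨hxA, hxB⟩
    · rw [pw_of_not_mem hxA]
  rw [hsplit, map_mul, hφ₁, hφ₂, one_mul]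


lemma P_iInter [IsFiniteMeasure μ]
    (hφ : ∀ v : H, Continuous fun f : X →ₘ[μ] Circle => (φ f : H →L[ℂ] H) v)
    (B : ℕ → Set X) (hBm : ∀ n, MeasurableSet (B n)) (hBanti : Antitone B)
    (hPB : ∀ n, P μ φ (B n)) : P μ φ (⋂ n, B n) := by
  intro h hh
  set A : Set X := ⋂ n, B n with hA_def
  have hAm : MeasurableSet A := MeasurableSet.iInter hBm
  set s : ℕ → X →ₘ[μ] Circle := fun n =>
    AEEqFun.mk (pw (B n)ᶜ ⇑h) (aesm_pw (hBm n).compl h.aestronglyMeasurable.restrict)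
    with hs_def
  have hsc : ∀ n, ⇑(s n) =ᵐ[μ] pw (B n)ᶜ ⇑h := fun n => AEEqFun.coeFn_mk _ _
  have hs1 : ∀ n, φ (s n) = 1 := by
    intro n
    apply hPB n
    filter_upwards [(hsc n).restrict (s := B n), ae_restrict_mem (hBm n)] with x h1x hxB
    rw [h1x, pw_of_not_mem (by simpa using hxB)]
  have hhA : ∀ᵐ x ∂μ, x ∈ A → h x = 1 := (ae_restrict_iff' hAm).1 hh
  have key : ∀ n, ∀ᵐ x ∂μ, (s n) x = h x ∨ x ∈ B n \ A := by
    intro n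
    filter_upwards [hsc n, hhA] with x h1x h2x
    by_cases hxB : x ∈ B n
    · by_cases hxA : x ∈ A
      · left; rw [h1x, pw_of_not_mem (by simpa using hxB), h2x hxA]
      · right; exact ⟨hxB, hxA⟩
    · left; rw [h1x, pw_of_mem (by simpa using hxB)]
  have hBA : Tendsto (fun n => μ (B n \ A)) atTop (𝓝 0) := by
    have h1 : Tendsto (fun n => μ (B n)) atTop (𝓝 (μ A)) :=
      tendsto_measure_iInter_atTop (fun n => (hBm n).nullMeasurableSet) hBanti
        ⟨0, measure_ne_top μ _⟩
    have h2 : ∀ n, μ (B n \ A) = μ (B n) - μ A := fun n =>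
      measure_diff (Set.iInter_subset B n) hAm.nullMeasurableSet (measure_ne_top μ A)
    have h3 : Tendsto (fun n => μ (B n) - μ A) atTop (𝓝 (μ A - μ A)) :=
      ENNReal.Tendsto.sub h1 tendsto_const_nhds (Or.inr (measure_ne_top μ A))
    rw [tsub_self] at h3
    simpa only [h2] using h3
  have hten : Tendsto s atTop (𝓝 h) := by
    apply tendsto_gen
    rintro U ⟨f, ε, δ, hε, hδ, rfl⟩ hhU
    simp only [Set.mem_setOf_eq] at hhU ⊢
    set a : ℝ≥0∞ := μ { x | ε ≤ dist (f x) (h x) } with ha_def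
    have hane : a ≠ ∞ := (hhU.trans ENNReal.ofReal_lt_top).ne
    have hb : ∀ n, μ { x | ε ≤ dist (f x) ((s n) x) } ≤ a + μ (B n \ A) := by
      intro n
      refine le_trans (measure_mono_ae ?_) (measure_union_le _ _)
      filter_upwards [key n] with x hx hmem
      rcases hx with hx | hx
      · left; rw [Set.mem_setOf_eq, ← hx]; exact hmem
      · right; exact hx
    have hpos : (0 : ℝ≥0∞) < ENNReal.ofReal δ - a := by
      rw [tsub_pos_iff_lt]; exact hhU
    filter_upwards [hBA.eventually_lt_const hpos] with n hn
    refine lt_of_le_of_lt (hb n) ?_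
    calc a + μ (B n \ A) < a + (ENNReal.ofReal δ - a) := ENNReal.add_lt_add_left hane hn
      _ = ENNReal.ofReal δ := add_tsub_cancel_of_le hhU.le
  have hv : ∀ v : H, (φ h : H →L[ℂ] H) v = v := by
    intro v
    have t1 : Tendsto (fun n => (φ (s n) : H →L[ℂ] H) v) atTop (𝓝 ((φ h : H →L[ℂ] H) v)) :=
      ((hφ v).tendsto h).comp hten
    have t2 : (fun n => (φ (s n) : H →L[ℂ] H) v) = fun _ => v := by
      funext n; rw [hs1 n]; rfl
    rw [t2] at t1
    exact (tendsto_nhds_unique tendsto_const_nhds t1).symm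
  exact Subtype.ext (ContinuousLinearMap.ext fun v => by
    rw [hv v]; rfl)

end SoleckiAux

/-- **Corollary 2.2** (Solecki): for every continuous unitary representation `φ` of
`L⁰(μ, 𝕋)` on a separable complex Hilbert space there is a smallest (with respect to
absolute continuity) finite Borel measure `ν ≪ μ` such that `φ` factors through the natural
homomorphism `L⁰(μ, 𝕋) → L⁰(ν, 𝕋)`. -/
theorem statement2
    {X : Type*} [mX : MeasurableSpace X] [StandardBorelSpace X]
    (μ : Measure X) [IsProbabilityMeasure μ]
    {H : Type*} [NormedAddCommGroup H] [InnerProductSpace ℂ H] [CompleteSpace H]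
    [SeparableSpace H]
    -- `φ` is a strongly continuous unitary representation of `L⁰(μ, 𝕋)` on `H`
    (φ : (X →ₘ[μ] Circle) →* unitary (H →L[ℂ] H))
    (hφ : ∀ v : H, Continuous fun f : X →ₘ[μ] Circle => (φ f : H →L[ℂ] H) v) :
    ∃ (ν : Measure X) (hν : ν ≪ μ), IsFiniteMeasure ν ∧
      -- (i) `φ` factors through the natural homomorphism `L⁰(μ, 𝕋) → L⁰(ν, 𝕋)`
      FactorsThroughL0 φ hν ∧
      -- (ii) `ν` is smallest with this property with respect to absolute continuity
      ∀ (ν' : Measure X) (hν' : ν' ≪ μ), IsFiniteMeasure ν' →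
        FactorsThroughL0 φ hν' → ν ≪ ν' := by
  classical
  open SoleckiAux Filter in
  set 𝒜 : Set (Set X) := {A | MeasurableSet A ∧ SoleckiAux.P μ φ A} with h𝒜_def
  have hU : Set.univ ∈ 𝒜 := ⟨MeasurableSet.univ, SoleckiAux.P_univ φ⟩
  set m : ℝ≥0∞ := ⨅ A ∈ 𝒜, μ A with hm_def
  have hm_ne : m ≠ ∞ := by
    have h1 : m ≤ μ Set.univ := iInf₂_le Set.univ hU
    exact (h1.trans_lt (measure_lt_top μ _)).ne
  have hex : ∀ n : ℕ, ∃ A ∈ 𝒜, μ A < m + ((n : ℝ≥0∞) + 1)⁻¹ := by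
    intro n
    have hlt : (⨅ A ∈ 𝒜, μ A) < m + ((n : ℝ≥0∞) + 1)⁻¹ := by
      rw [← hm_def]
      exact ENNReal.lt_add_right hm_ne (by simp)
    rw [iInf_lt_iff] at hlt
    obtain ⟨A, hA⟩ := hlt
    rw [iInf_lt_iff] at hA
    obtain ⟨hA𝒜, hAlt⟩ := hA
    exact ⟨A, hA𝒜, hAlt⟩
  choose Aseq hAseq𝒜 hAseqlt using hex
  set B : ℕ → Set X := fun n =>
    Nat.rec (motive := fun _ => Set X) (Aseq 0) (fun k Bk => Bk ∩ Aseq (k + 1)) n with hB_def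
  have hBsucc : ∀ n, B (n + 1) = B n ∩ Aseq (n + 1) := fun n => rfl
  have hB𝒜 : ∀ n, B n ∈ 𝒜 := by
    intro n
    induction n with
    | zero => exact hAseq𝒜 0
    | succ k ih =>
      exact ⟨ih.1.inter (hAseq𝒜 (k + 1)).1,
        SoleckiAux.P_inter ih.1 (hAseq𝒜 (k + 1)).1 ih.2 (hAseq𝒜 (k + 1)).2⟩
  have hBsub : ∀ n, B n ⊆ Aseq n := by
    intro n
    cases n with
    | zero => exact subset_rfl
    | succ k => rw [hBsucc]; exact Set.inter_subset_right
  have hBanti : Antitone B := antitone_nat_of_succ_le fun n => by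
    rw [hBsucc]; exact Set.inter_subset_left
  set Ainf : Set X := ⋂ n, B n with hAinf_def
  have hAm : MeasurableSet Ainf := MeasurableSet.iInter fun n => (hB𝒜 n).1
  have hAP : SoleckiAux.P μ φ Ainf :=
    SoleckiAux.P_iInter hφ B (fun n => (hB𝒜 n).1) hBanti (fun n => (hB𝒜 n).2)
  have hA𝒜 : Ainf ∈ 𝒜 := ⟨hAm, hAP⟩
  have hge : m ≤ μ Ainf := iInf₂_le Ainf hA𝒜
  have hle : μ Ainf ≤ m := by
    by_contra hcon
    push_neg at hcon
    obtain ⟨k, hk⟩ := ENNReal.exists_inv_nat_lt (a := μ Ainf - m)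
      (by rw [Ne, tsub_eq_zero_iff_le]; exact not_le.2 hcon)
    have h1 : μ Ainf ≤ μ (Aseq k) :=
      measure_mono ((Set.iInter_subset B k).trans (hBsub k))
    have h3 : ((k : ℝ≥0∞) + 1)⁻¹ ≤ ((k : ℝ≥0∞))⁻¹ := ENNReal.inv_le_inv.2 le_self_add
    have h4 : m + ((k : ℝ≥0∞))⁻¹ < m + (μ Ainf - m) := ENNReal.add_lt_add_left hm_ne hk
    have h5 : m + (μ Ainf - m) = μ Ainf := add_tsub_cancel_of_le hcon.le
    have h6 : μ (Aseq k) < μ Ainf := by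
      calc μ (Aseq k) < m + ((k : ℝ≥0∞) + 1)⁻¹ := hAseqlt k
        _ ≤ m + ((k : ℝ≥0∞))⁻¹ := add_le_add_right h3 m
        _ < μ Ainf := h5 ▸ h4
    exact absurd (h1.trans_lt h6) (lt_irrefl _)
  have hμA : μ Ainf = m := le_antisymm hle hge
  have hmin : ∀ C, MeasurableSet C → SoleckiAux.P μ φ C → μ (Ainf \ C) = 0 := by
    intro C hCm hCP
    have h1 : Ainf ∩ C ∈ 𝒜 := ⟨hAm.inter hCm, SoleckiAux.P_inter hAm hCm hAP hCP⟩
    have h2 : m ≤ μ (Ainf ∩ C) := iInf₂_le _ h1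
    have h3 : μ (Ainf ∩ C) + μ (Ainf \ C) = μ Ainf := measure_inter_add_diff _ hCm
    have h4 : μ (Ainf ∩ C) + μ (Ainf \ C) ≤ μ (Ainf ∩ C) + 0 := by
      rw [add_zero, h3, hμA]; exact h2
    have h5 := (ENNReal.add_le_add_iff_left (measure_ne_top μ _)).1 h4
    exact le_antisymm h5 zero_le
  have hνac : μ.restrict Ainf ≪ μ :=
    Measure.absolutelyContinuous_of_le Measure.restrict_le_self
  refine ⟨μ.restrict Ainf, hνac, inferInstance, ?_, ?_⟩
  · refine ⟨φ.comp (SoleckiAux.extHom hAm),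
      fun v => (hφ v).comp (SoleckiAux.continuous_ext1 hAm), fun f => ?_⟩
    have hker : ⇑(f * (SoleckiAux.ext1 hAm (l0NatMap hνac f))⁻¹)
        =ᵐ[μ.restrict Ainf] fun _ => 1 := by
      have c1 := (AEEqFun.coeFn_mul f
        (SoleckiAux.ext1 hAm (l0NatMap hνac f))⁻¹).restrict (s := Ainf)
      have c2 := (AEEqFun.coeFn_inv
        (SoleckiAux.ext1 hAm (l0NatMap hνac f))).restrict (s := Ainf)
      have c3 := (SoleckiAux.coeFn_ext1 hAm (l0NatMap hνac f)).restrict (s := Ainf)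
      have c4 : ⇑(l0NatMap hνac f) =ᵐ[μ.restrict Ainf] ⇑f := AEEqFun.coeFn_mk _ _
      filter_upwards [c1, c2, c3, c4, MeasureTheory.ae_restrict_mem hAm]
        with x h1 h2 h3 h4 hxA
      rw [h1, Pi.mul_apply, h2, Pi.inv_apply, h3, SoleckiAux.pw_of_mem hxA, h4]
      exact mul_inv_cancel _
    have h1 := hAP _ hker
    rw [map_mul, map_inv] at h1
    have h2 := mul_inv_eq_one.1 h1
    exact h2
  · rintro ν' hν' hfin' hfact
    obtain ⟨ψ', hψ'c, hψ'⟩ := hfact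
    refine Measure.AbsolutelyContinuous.mk fun t htm ht0 => ?_
    have hPt : SoleckiAux.P μ φ tᶜ := by
      intro h hh
      have h1 : ∀ᵐ x ∂μ, x ∈ tᶜ → h x = 1 := (ae_restrict_iff' htm.compl).1 hh
      have h2 : ∀ᵐ x ∂ν', x ∈ tᶜ → h x = 1 := h1.filter_mono hν'.ae_le
      have h3 : ∀ᵐ x ∂ν', x ∉ t := measure_eq_zero_iff_ae_notMem.1 ht0
      have h4 : l0NatMap hν' h = 1 := by
        apply AEEqFun.ext
        have ha : ⇑(l0NatMap hν' h) =ᵐ[ν'] ⇑h := AEEqFun.coeFn_mk _ _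
        filter_upwards [ha, h2, h3, AEEqFun.coeFn_one (β := Circle) (μ := ν')]
          with x a b c d
        rw [a, d, Pi.one_apply]
        exact b c
      rw [hψ' h, h4, map_one]
    have h5 := hmin tᶜ htm.compl hPt
    rw [Measure.restrict_apply htm]
    have h6 : t ∩ Ainf ⊆ Ainf \ tᶜ := fun x hx => ⟨hx.2, by simpa using hx.1⟩
    exact le_antisymm (le_trans (measure_mono h6) h5.le) zero_le


end
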